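/- For each positive integer n, ∫_{1/(n+1)}^{1/n} n(xn + x - 1) dx = 1/(2n(n+1)), and hence ∫_0^1 ⌊1/x⌋(x⌊1/x⌋ + x - 1) dx = Σ_{n=1}^∞ 1/(2n(n+1)) = 1/2. -/

import Mathlib

open scoped BigOperators
open MeasureTheory Filter

private lemma part1 (n : ℕ) (hn : 0 < n) :
    (∫ x in Set.Ioo (1 / ((n : ℝ) + 1)) (1 / (n : ℝ)),
        (n : ℝ) * (x * (n : ℝ) + x - 1)) = 1 / (2 * (n : ℝ) * ((n : ℝ) + 1)) := by
  have hn0 : (0:ℝ) < n := by exact_mod_cast hn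
  have hle : 1 / ((n : ℝ) + 1) ≤ 1 / (n : ℝ) :=
    one_div_le_one_div_of_le hn0 (by linarith)
  rw [← MeasureTheory.integral_Ioc_eq_integral_Ioo,
    ← intervalIntegral.integral_of_le hle]
  have hF : ∀ x ∈ Set.uIcc (1 / ((n : ℝ) + 1)) (1 / (n : ℝ)),
      HasDerivAt (fun x : ℝ => (n : ℝ) * (((n : ℝ) + 1) * x ^ 2 / 2 - x))
        ((n : ℝ) * (x * (n : ℝ) + x - 1)) x := by
    intro x _
    have h1 : HasDerivAt (fun x : ℝ => (((n : ℝ) + 1) * x ^ 2 / 2 - x))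
        ((((n : ℝ) + 1) * (2 * x ^ 1)) / 2 - 1) x :=
      ((((hasDerivAt_pow 2 x).const_mul ((n : ℝ) + 1)).div_const 2).sub (hasDerivAt_id x))
    have h2 := h1.const_mul (n : ℝ)
    refine h2.congr_deriv ?_
    ring
  rw [intervalIntegral.integral_eq_sub_of_hasDerivAt hF
    (by apply Continuous.intervalIntegrable; fun_prop)]
  have h1 : (n : ℝ) ≠ 0 := ne_of_gt hn0
  have h2 : (n : ℝ) + 1 ≠ 0 := by positivity
  field_simp
  ring

private lemma part3 :
    (∑' n : ℕ, 1 / (2 * ((n : ℝ) + 1) * ((n : ℝ) + 2))) = 1 / 2 := by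
  have key : ∀ N : ℕ, ∑ k ∈ Finset.range N, 1 / (2 * ((k : ℝ) + 1) * ((k : ℝ) + 2))
      = 1 / 2 - 1 / (2 * ((N : ℝ) + 1)) := by
    intro N
    induction N with
    | zero => norm_num
    | succ n ih =>
      rw [Finset.sum_range_succ, ih]
      have h1 : ((n : ℝ) + 1) ≠ 0 := by positivity
      have h2 : ((n : ℝ) + 2) ≠ 0 := by positivity
      push_cast
      field_simp
      ring
  have hnn : ∀ i : ℕ, (0:ℝ) ≤ 1 / (2 * ((i : ℝ) + 1) * ((i : ℝ) + 2)) := by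
    intro i; positivity
  have h0 : Tendsto (fun N : ℕ => 1 / (2 * ((N : ℝ) + 1))) atTop (nhds 0) := by
    have := tendsto_one_div_add_atTop_nhds_zero_nat.const_mul (1/2 : ℝ)
    rw [mul_zero] at this
    convert this using 2 with N
    field_simp
  have hsum : HasSum (fun n : ℕ => 1 / (2 * ((n : ℝ) + 1) * ((n : ℝ) + 2))) (1/2) := by
    rw [hasSum_iff_tendsto_nat_of_nonneg hnn]
    simp only [key]
    have hc : Tendsto (fun _ : ℕ => (1/2 : ℝ)) atTop (nhds (1/2)) := tendsto_const_nhds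
    simpa using hc.sub h0
  exact hsum.tsum_eq

private lemma floor_eq (n : ℕ) {x : ℝ} (hx : x ∈ Set.Ioc (1 / ((n : ℝ) + 2)) (1 / ((n : ℝ) + 1))) :
    ⌊1 / x⌋ = (n : ℤ) + 1 := by
  have hx0 : (0:ℝ) < x := lt_trans (by positivity) hx.1
  rw [Int.floor_eq_iff]
  push_cast
  constructor
  · rw [le_div_iff₀ hx0]
    have := (le_div_iff₀ (by positivity : (0:ℝ) < (n:ℝ) + 1)).1 hx.2
    linarith
  · rw [div_lt_iff₀ hx0]
    have := (div_lt_iff₀ (by positivity : (0:ℝ) < (n:ℝ) + 2)).1 hx.1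
    linarith

private lemma part2 :
    (∫ x in Set.Ioo (0 : ℝ) 1, (⌊1 / x⌋ : ℝ) * (x * (⌊1 / x⌋ : ℝ) + x - 1)) =
      ∑' n : ℕ, 1 / (2 * ((n : ℝ) + 1) * ((n : ℝ) + 2)) := by
  set f : ℝ → ℝ := fun x => (⌊1 / x⌋ : ℝ) * (x * (⌊1 / x⌋ : ℝ) + x - 1) with hf
  have hmeas : Measurable f := by
    have h1 : Measurable fun x : ℝ => (⌊1 / x⌋ : ℝ) :=
      Measurable.comp (by fun_prop : Measurable (Int.cast : ℤ → ℝ))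
        ((measurable_const.div measurable_id).floor)
    exact h1.mul ((measurable_id.mul h1).add measurable_id |>.sub measurable_const)
  have hbound : ∀ x ∈ Set.Ioc (0:ℝ) 1, ‖f x‖ ≤ 1 := by
    intro x hx
    have hx0 : (0:ℝ) < x := hx.1
    have hm1 : (1:ℤ) ≤ ⌊1/x⌋ := by
      apply Int.le_floor.2
      rw [Int.cast_one, le_div_iff₀ hx0]
      linarith [hx.2]
    have hm1' : (1:ℝ) ≤ (⌊1/x⌋ : ℝ) := by exact_mod_cast hm1
    have hl : ((⌊1/x⌋:ℝ)) * x ≤ 1 := (le_div_iff₀ hx0).1 (Int.floor_le _)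
    have hu : 1 < ((⌊1/x⌋:ℝ) + 1) * x := by
      have := (div_lt_iff₀ hx0).1 (Int.lt_floor_add_one (1/x))
      linarith
    rw [hf, Real.norm_eq_abs, abs_le]
    constructor <;> nlinarith
  have hInt : IntegrableOn f (Set.Ioc 0 1) := by
    apply MeasureTheory.Measure.integrableOn_of_bounded (M := 1)
    · simp [Real.volume_Ioc]
    · exact hmeas.aestronglyMeasurable
    · exact (ae_restrict_iff' measurableSet_Ioc).2 (MeasureTheory.ae_of_all _ hbound)
  have hunion : (⋃ n : ℕ, Set.Ioc (1 / ((n : ℝ) + 2)) (1 / ((n : ℝ) + 1))) = Set.Ioc 0 1 := by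
    ext x
    simp only [Set.mem_iUnion, Set.mem_Ioc]
    constructor
    · rintro ⟨n, h1, h2⟩
      have h0 : (0:ℝ) < 1 / ((n:ℝ) + 2) := by positivity
      have h3 : 1 / ((n:ℝ) + 1) ≤ 1 := by
        rw [div_le_one (by positivity)]; linarith
      exact ⟨lt_trans h0 h1, le_trans h2 h3⟩
    · rintro ⟨hx0, hx1⟩
      have hm1 : (1:ℤ) ≤ ⌊1/x⌋ := by
        apply Int.le_floor.2
        rw [Int.cast_one, le_div_iff₀ hx0]
        linarith
      have hz : (((⌊1/x⌋ - 1).toNat : ℤ)) = ⌊1/x⌋ - 1 := Int.toNat_of_nonneg (by omega)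
      have hcast : (((⌊1/x⌋ - 1).toNat : ℕ) : ℝ) = (⌊1/x⌋ : ℝ) - 1 := by
        exact_mod_cast congrArg (Int.cast : ℤ → ℝ) hz
      refine ⟨(⌊1/x⌋ - 1).toNat, ?_, ?_⟩ <;> rw [hcast]
      · have hfpos : (0:ℝ) < (⌊1/x⌋:ℝ) + 1 := by
          have : (1:ℝ) ≤ (⌊1/x⌋:ℝ) := by exact_mod_cast hm1
          linarith
        rw [show (⌊1/x⌋:ℝ) - 1 + 2 = (⌊1/x⌋:ℝ) + 1 by ring, div_lt_iff₀ hfpos]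
        have := (div_lt_iff₀ hx0).1 (Int.lt_floor_add_one (1/x))
        linarith
      · have hfpos : (0:ℝ) < (⌊1/x⌋:ℝ) := by
          have : (1:ℝ) ≤ (⌊1/x⌋:ℝ) := by exact_mod_cast hm1
          linarith
        rw [show (⌊1/x⌋:ℝ) - 1 + 1 = (⌊1/x⌋:ℝ) by ring, le_div_iff₀ hfpos]
        have := (le_div_iff₀ hx0).1 (Int.floor_le (1/x))
        linarith
  have hdisj : Pairwise (Function.onFun Disjoint fun n : ℕ =>
      Set.Ioc (1 / ((n : ℝ) + 2)) (1 / ((n : ℝ) + 1))) := by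
    intro i j hij
    rw [Function.onFun, Set.Ioc_disjoint_Ioc]
    rcases hij.lt_or_gt with h | h
    · have : 1 / ((j:ℝ) + 1) ≤ 1 / ((i:ℝ) + 2) := by
        apply one_div_le_one_div_of_le (by positivity)
        have : (i:ℝ) + 1 ≤ (j:ℝ) := by exact_mod_cast h
        linarith
      exact le_trans (min_le_right _ _) (le_trans this (le_max_left _ _))
    · have : 1 / ((i:ℝ) + 1) ≤ 1 / ((j:ℝ) + 2) := by
        apply one_div_le_one_div_of_le (by positivity)
        have : (j:ℝ) + 1 ≤ (i:ℝ) := by exact_mod_cast h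
        linarith
      exact le_trans (min_le_left _ _) (le_trans this (le_max_right _ _))
  have step1 : (∫ x in Set.Ioo (0:ℝ) 1, f x) = ∫ x in Set.Ioc (0:ℝ) 1, f x :=
    (MeasureTheory.integral_Ioc_eq_integral_Ioo).symm
  rw [step1, ← hunion,
    MeasureTheory.integral_iUnion (fun _ => measurableSet_Ioc) hdisj (hunion ▸ hInt)]
  congr 1
  funext n
  have heq : Set.EqOn f (fun x => ((n:ℝ)+1) * (x * ((n:ℝ)+1) + x - 1))
      (Set.Ioc (1 / ((n : ℝ) + 2)) (1 / ((n : ℝ) + 1))) := by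
    intro x hx
    have := floor_eq n hx
    simp only [hf, this]
    push_cast
    ring
  rw [MeasureTheory.setIntegral_congr_fun measurableSet_Ioc heq,
    MeasureTheory.integral_Ioc_eq_integral_Ioo]
  have := part1 (n+1) (Nat.succ_pos n)
  push_cast at this ⊢
  rw [show ((n:ℝ) + 1 + 1) = (n:ℝ) + 2 by ring] at this
  exact this

theorem harmonic_sawtooth_length :
    (∀ n : ℕ, 0 < n →
      (∫ x in Set.Ioo (1 / ((n : ℝ) + 1)) (1 / (n : ℝ)),
          (n : ℝ) * (x * (n : ℝ) + x - 1)) = 1 / (2 * (n : ℝ) * ((n : ℝ) + 1))) ∧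
    (∫ x in Set.Ioo (0 : ℝ) 1, (⌊1 / x⌋ : ℝ) * (x * (⌊1 / x⌋ : ℝ) + x - 1)) =
      ∑' n : ℕ, 1 / (2 * ((n : ℝ) + 1) * ((n : ℝ) + 2)) ∧
    (∑' n : ℕ, 1 / (2 * ((n : ℝ) + 1) * ((n : ℝ) + 2))) = 1 / 2 := by
  exact ⟨part1, part2, part3⟩
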